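/- Let K be a field, n ≥ 1, and A an m×n matrix over K. The following are equivalent: (i) A has rank n−1 and there exists λ ∈ K^n with all entries nonzero such that A·λ = 0; (ii) A has rank strictly less than n and, for every j ∈ {1,…,n}, the m×(n−1) submatrix of A obtained by deleting column j has rank n−1. -/
import Mathlib

open Matrix Module

private lemma submatrix_mulVec_eq {K : Type*} [Field K] {m n : ℕ}
    (A : Matrix (Fin m) (Fin (n + 1)) K) (j : Fin (n + 1)) (v : Fin n → K) :
    (A.submatrix id j.succAbove).mulVec v = A.mulVec (j.insertNth 0 v) := by
  funext i
  simp [Matrix.mulVec, dotProduct, Fin.sum_univ_succAbove _ j]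

private lemma range_le {K : Type*} [Field K] {m n : ℕ}
    (A : Matrix (Fin m) (Fin (n + 1)) K) (j : Fin (n + 1)) :
    LinearMap.range (A.submatrix id j.succAbove).mulVecLin ≤ LinearMap.range A.mulVecLin := by
  rintro x ⟨v, rfl⟩
  exact ⟨j.insertNth 0 v, (submatrix_mulVec_eq A j v).symm⟩

/-- For an `m × n` matrix `A` over a field `K` (with `n ≥ 1`, written
here as `n + 1` columns), the following are equivalent: (i) `A` has rank `n - 1` and
there is a vector `λ` with all entries nonzero such that `A·λ = 0`; (ii) `A` has rank
strictly less than `n` and every submatrix of `A` obtained by deleting one column has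
rank `n - 1`. -/
theorem rank_deficient_torus_kernel_iff {K : Type*} [Field K] {m n : ℕ}
    (A : Matrix (Fin m) (Fin (n + 1)) K) :
    (A.rank = n ∧ ∃ lam : Fin (n + 1) → K, (∀ i, lam i ≠ 0) ∧ A.mulVec lam = 0) ↔
      (A.rank < n + 1 ∧ ∀ j : Fin (n + 1), (A.submatrix id j.succAbove).rank = n) := by
  constructor
  · rintro ⟨hr, lam, hlam, hAlam⟩
    refine ⟨by omega, fun j => ?_⟩
    have hrange : LinearMap.range (A.submatrix id j.succAbove).mulVecLin
        = LinearMap.range A.mulVecLin := by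
      refine le_antisymm (range_le A j) ?_
      rintro x ⟨v, rfl⟩
      set w : Fin (n + 1) → K := v - (v j / lam j) • lam with hw
      have hwj : w j = 0 := by
        simp [hw, div_mul_cancel₀, hlam j]
      refine ⟨j.removeNth w, ?_⟩
      rw [Matrix.mulVecLin_apply, Matrix.mulVecLin_apply, submatrix_mulVec_eq,
        ← hwj, Fin.insertNth_self_removeNth]
      have : A.mulVec w = A.mulVec v - (v j / lam j) • A.mulVec lam := by
        simp [hw, Matrix.mulVec_sub, Matrix.mulVec_smul]
      simp [this, hAlam]
    rw [Matrix.rank, hrange, ← Matrix.rank, hr]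
  · rintro ⟨hlt, hsub⟩
    have hge : n ≤ A.rank := by
      calc n = (A.submatrix id (0 : Fin (n + 1)).succAbove).rank := (hsub 0).symm
        _ ≤ A.rank := by
            rw [Matrix.rank, Matrix.rank]
            exact Submodule.finrank_mono (range_le A 0)
    have hr : A.rank = n := by omega
    have hker : finrank K (LinearMap.ker A.mulVecLin) = 1 := by
      have h := LinearMap.finrank_range_add_finrank_ker A.mulVecLin
      rw [← Matrix.rank, hr] at h
      simp only [Module.finrank_pi, Fintype.card_fin] at h
      omega
    obtain ⟨lam, hlamker, hlamne⟩ : ∃ x ∈ LinearMap.ker A.mulVecLin, x ≠ 0 := by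
      rw [← Submodule.ne_bot_iff]
      intro hbot
      rw [hbot] at hker
      simp at hker
    have hAlam : A.mulVec lam = 0 := hlamker
    refine ⟨hr, lam, fun j => ?_, hAlam⟩
    intro hj
    have hkersub : LinearMap.ker (A.submatrix id j.succAbove).mulVecLin = ⊥ := by
      have h := LinearMap.finrank_range_add_finrank_ker (A.submatrix id j.succAbove).mulVecLin
      rw [← Matrix.rank, hsub j] at h
      simp only [Module.finrank_pi, Fintype.card_fin] at h
      have : finrank K (LinearMap.ker (A.submatrix id j.succAbove).mulVecLin) = 0 := by omega
      exact Submodule.finrank_eq_zero.mp this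
    have hv : (A.submatrix id j.succAbove).mulVec (j.removeNth lam) = 0 := by
      rw [submatrix_mulVec_eq, ← hj, Fin.insertNth_self_removeNth]
      exact hAlam
    have hrm : j.removeNth lam = 0 := by
      have := hkersub ▸ (LinearMap.mem_ker.mpr hv : j.removeNth lam ∈ _)
      simpa using this
    apply hlamne
    rw [← Fin.insertNth_self_removeNth j lam, hj, hrm]
    simp
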